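/- Let N ≥ 1 be an integer, let Γ₀(N) ⊂ SL(2,ℤ) be the subgroup of matrices whose lower-left entry is divisible by N, and let G be the subgroup of GL(2,ℤ) generated by Γ₀(N) and the matrix [[−1,0],[0,1]]. Let P = GL(2,ℤ)/G with the left multiplication action. Then for every t ∈ P, {g·t : g ∈ Red_3} = P, i.e. every coset is reached from t by a product of exactly three matrices of the form [[0,1],[1,k]] with k ≥ 1. -/

import Mathlib

open MeasureTheory Filter Matrix

set_option synthInstance.maxHeartbeats 1000000
set_option maxHeartbeats 1000000

noncomputable section

/-- The matrix `γ_k = [[0,1],[1,k]]` as an element of `GL(2,ℤ)`. -/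
def gammaK (k : ℤ) : GL (Fin 2) ℤ :=
  ⟨!![0,1;1,k], !![-k,1;1,0],
   by ext i j; fin_cases i <;> fin_cases j <;>
      simp [Matrix.mul_apply, Fin.sum_univ_two, Matrix.one_apply],
   by ext i j; fin_cases i <;> fin_cases j <;>
      simp [Matrix.mul_apply, Fin.sum_univ_two, Matrix.one_apply]⟩

/-- `Red_n`: products of exactly `n` matrices `γ_k`, `k ≥ 1`. -/
def RedN (n : ℕ) : Set (GL (Fin 2) ℤ) :=
  { g | ∃ k : Fin n → ℤ, (∀ i, 1 ≤ k i) ∧ g = (List.ofFn (fun i => gammaK (k i))).prod }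

/-- The sign-change matrix `[[-1,0],[0,1]]` as an element of `GL(2,ℤ)`. -/
def signChange : GL (Fin 2) ℤ :=
  ⟨!![-1,0;0,1], !![-1,0;0,1],
   by ext i j; fin_cases i <;> fin_cases j <;>
      simp [Matrix.mul_apply, Fin.sum_univ_two, Matrix.one_apply],
   by ext i j; fin_cases i <;> fin_cases j <;>
      simp [Matrix.mul_apply, Fin.sum_univ_two, Matrix.one_apply]⟩

/-- The subgroup of `GL(2,ℤ)` generated by (the lift of) `Γ₀(N)` and the sign change. -/
def liftedGamma0 (N : ℕ) : Subgroup (GL (Fin 2) ℤ) :=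
  Subgroup.closure
    ((Matrix.SpecialLinearGroup.toGL ''
        ((CongruenceSubgroup.Gamma0 N : Subgroup (Matrix.SpecialLinearGroup (Fin 2) ℤ)) :
          Set (Matrix.SpecialLinearGroup (Fin 2) ℤ))) ∪ {signChange})

/-- In an arithmetic progression `a + k*c` with `a, c` coprime, there is a term which is a
unit modulo `N`. -/
lemma exists_unit_AP (N : ℕ) [NeZero N] {a c : ℤ} (h : IsCoprime a c) :
    ∃ k : ℤ, IsUnit ((↑(a + k * c) : ZMod N)) := by
  let ps := N.primeFactors.filter (fun p : ℕ => ¬ ((p : ℤ) ∣ a))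
  refine ⟨((ps.prod id : ℕ) : ℤ), ?_⟩
  set k : ℤ := ((ps.prod id : ℕ) : ℤ) with hk
  have hcop : IsCoprime (a + k * c) (N : ℤ) := by
    rw [Int.isCoprime_iff_gcd_eq_one]
    by_contra hg
    set g := Int.gcd (a + k * c) N with hgdef
    have hp : g.minFac.Prime := Nat.minFac_prime hg
    set p := g.minFac with hpdef
    have hpg : (p : ℤ) ∣ (g : ℤ) := Int.natCast_dvd_natCast.mpr (Nat.minFac_dvd g)
    have hpakc : (p : ℤ) ∣ (a + k * c) := hpg.trans (Int.gcd_dvd_left _ _)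
    have hpN : (p : ℤ) ∣ (N : ℤ) := hpg.trans (Int.gcd_dvd_right _ _)
    have hpNn : p ∣ N := Int.natCast_dvd_natCast.mp hpN
    have hpZ : Prime (p : ℤ) := Nat.prime_iff_prime_int.mp hp
    by_cases hpa : (p : ℤ) ∣ a
    · have hpps : p ∉ ps := by
        simp only [ps, Finset.mem_filter]
        tauto
      have hpk : ¬ (p : ℤ) ∣ k := by
        rw [hk, Int.natCast_dvd_natCast]
        intro hd
        obtain ⟨q, hq, hq'⟩ := (hp.prime.dvd_finset_prod_iff id).mp hd
        have : p = q := (Nat.prime_dvd_prime_iff_eq hp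
          (Nat.prime_of_mem_primeFactors (Finset.mem_filter.mp hq).1)).mp hq'
        exact hpps (this ▸ hq)
      have hpkc : (p : ℤ) ∣ k * c := by
        have := dvd_sub hpakc hpa
        simpa using this
      rcases hpZ.dvd_mul.mp hpkc with h1 | h1
      · exact hpk h1
      · exact hpZ.not_unit (h.isUnit_of_dvd' hpa h1)
    · have hpps : p ∈ ps := by
        simp only [ps, Finset.mem_filter, Nat.mem_primeFactors]
        exact ⟨⟨hp, hpNn, NeZero.ne N⟩, hpa⟩
      have hpk : (p : ℤ) ∣ k := by
        rw [hk, Int.natCast_dvd_natCast]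
        exact Finset.dvd_prod_of_mem id hpps
      have hpa' : (p : ℤ) ∣ a := by
        have := dvd_sub hpakc (hpk.mul_right c)
        simpa using this
      exact hpa hpa'
  obtain ⟨s, t, hst⟩ := hcop
  refine IsUnit.of_mul_eq_one ((s : ZMod N)) ?_
  have := congrArg (fun x : ℤ => (x : ZMod N)) hst
  push_cast at this
  rw [ZMod.natCast_self] at this
  rw [mul_comm]
  push_cast
  linear_combination this

lemma signChange_mul_self : signChange * signChange = 1 := by
  apply Units.ext
  show (!![(-1:ℤ),0;0,1] * !![(-1:ℤ),0;0,1]) = (1 : Matrix (Fin 2) (Fin 2) ℤ)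
  ext i j; fin_cases i <;> fin_cases j <;>
    simp [Matrix.mul_apply, Fin.sum_univ_two, Matrix.one_apply]

lemma mem_liftedGamma0_of_det_one (N : ℕ) {g : GL (Fin 2) ℤ}
    (hdet : (g : Matrix (Fin 2) (Fin 2) ℤ).det = 1)
    (hdvd : (N:ℤ) ∣ ((g : Matrix (Fin 2) (Fin 2) ℤ) 1 0)) : g ∈ liftedGamma0 N := by
  set S : Matrix.SpecialLinearGroup (Fin 2) ℤ := ⟨g, hdet⟩ with hSdef
  have hS : S ∈ CongruenceSubgroup.Gamma0 N := by
    rw [CongruenceSubgroup.Gamma0_mem]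
    exact (ZMod.intCast_zmod_eq_zero_iff_dvd _ _).mpr hdvd
  have hgS : Matrix.SpecialLinearGroup.toGL S = g := Units.ext rfl
  apply Subgroup.subset_closure
  exact Or.inl ⟨S, hS, hgS⟩

lemma mem_liftedGamma0_of_dvd (N : ℕ) {g : GL (Fin 2) ℤ}
    (hdvd : (N:ℤ) ∣ ((g : Matrix (Fin 2) (Fin 2) ℤ) 1 0)) : g ∈ liftedGamma0 N := by
  have hd : ((Matrix.GeneralLinearGroup.det g : ℤˣ) : ℤ) = (g : Matrix (Fin 2) (Fin 2) ℤ).det := rfl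
  rcases Int.units_eq_one_or (Matrix.GeneralLinearGroup.det g) with h | h
  · refine mem_liftedGamma0_of_det_one N ?_ hdvd
    rw [← hd, h]; rfl
  · have hsc : signChange ∈ liftedGamma0 N := Subgroup.subset_closure (Or.inr rfl)
    have hg' : g * signChange ∈ liftedGamma0 N := by
      refine mem_liftedGamma0_of_det_one N ?_ ?_
      · have : ((g * signChange : GL (Fin 2) ℤ) : Matrix (Fin 2) (Fin 2) ℤ)
            = (g : Matrix (Fin 2) (Fin 2) ℤ) * !![(-1:ℤ),0;0,1] := rfl
        rw [this, Matrix.det_mul]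
        rw [← hd, h]
        norm_num [Matrix.det_fin_two]
      · have : ((g * signChange : GL (Fin 2) ℤ) : Matrix (Fin 2) (Fin 2) ℤ) 1 0
            = -((g : Matrix (Fin 2) (Fin 2) ℤ) 1 0) := by
          show ((g : Matrix (Fin 2) (Fin 2) ℤ) * !![(-1:ℤ),0;0,1]) 1 0 = _
          simp [Matrix.mul_apply, Fin.sum_univ_two]
        rw [this]
        exact hdvd.neg_right
    have : g = (g * signChange) * signChange := by
      rw [mul_assoc, signChange_mul_self, mul_one]
    rw [this]
    exact mul_mem hg' hsc

lemma entry_formula (k1 k2 k3 : ℤ) (E U : Matrix (Fin 2) (Fin 2) ℤ) :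
    (E * ((!![0,1;1,k1] * (!![0,1;1,k2] * !![0,1;1,k3])) * U)) 1 0
    = E 1 0 * ((U 1 0) + k2 * (U 0 0 + k3 * U 1 0))
      + E 1 1 * ((U 0 0 + k3 * U 1 0) + k1 * ((U 1 0) + k2 * (U 0 0 + k3 * U 1 0))) := by
  simp [Matrix.mul_apply, Fin.sum_univ_two, Matrix.vecMul, dotProduct, Matrix.vecHead,
    Matrix.vecTail]
  ring

/-- Key ring identity. -/
lemma key_ring {R : Type*} [CommRing R] (e10 e11 a c a' c' K1 K2 K3 wi zi : R)
    (hwi : (a + K3*c)*wi = 1) (hzi : (c' - K1*a')*zi = 1)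
    (hE : e10*a' + e11*c' = 0)
    (hK2 : K2 = wi*(zi*(a + K3*c)*a' - c)) :
    e10*(c + K2*(a + K3*c)) + e11*((a + K3*c) + K1*(c + K2*(a + K3*c))) = 0 := by
  subst hK2
  linear_combination (zi*(a+K3*c))*hE + ((e10+e11*K1)*(zi*(a+K3*c)*a' - c))*hwi
    - (e11*(a+K3*c))*hzi

/-- **Proposition 1.2.1**: for `G` generated by the lift of `Γ₀(N)` and the sign change,
`Red_3(t) = P` for every `t ∈ P = GL(2,ℤ)/G`. -/
theorem red_three_transitive (N : ℕ) (hN : 1 ≤ N)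
    (t : GL (Fin 2) ℤ ⧸ liftedGamma0 N) :
    {s : GL (Fin 2) ℤ ⧸ liftedGamma0 N | ∃ g ∈ RedN 3, g • t = s} = Set.univ := by
  have : NeZero N := ⟨by omega⟩
  ext s
  simp only [Set.mem_setOf_eq, Set.mem_univ, iff_true]
  obtain ⟨u, rfl⟩ := QuotientGroup.mk_surjective t
  obtain ⟨v, rfl⟩ := QuotientGroup.mk_surjective s
  have hFU : ((u⁻¹ : GL (Fin 2) ℤ) : Matrix (Fin 2) (Fin 2) ℤ)
      * (u : Matrix (Fin 2) (Fin 2) ℤ) = 1 := by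
    have := congrArg Units.val (inv_mul_cancel u)
    rwa [Units.val_mul, Units.val_one] at this
  have hEV : ((v⁻¹ : GL (Fin 2) ℤ) : Matrix (Fin 2) (Fin 2) ℤ)
      * (v : Matrix (Fin 2) (Fin 2) ℤ) = 1 := by
    have := congrArg Units.val (inv_mul_cancel v)
    rwa [Units.val_mul, Units.val_one] at this
  have hcopU : IsCoprime ((u : Matrix (Fin 2) (Fin 2) ℤ) 0 0)
      ((u : Matrix (Fin 2) (Fin 2) ℤ) 1 0) := by
    refine ⟨((u⁻¹ : GL (Fin 2) ℤ) : Matrix (Fin 2) (Fin 2) ℤ) 0 0,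
      ((u⁻¹ : GL (Fin 2) ℤ) : Matrix (Fin 2) (Fin 2) ℤ) 0 1, ?_⟩
    have := congrFun (congrFun hFU 0) 0
    simpa [Matrix.mul_apply, Fin.sum_univ_two, Matrix.one_apply] using this
  have hcopV : IsCoprime ((v : Matrix (Fin 2) (Fin 2) ℤ) 0 0)
      ((v : Matrix (Fin 2) (Fin 2) ℤ) 1 0) := by
    refine ⟨((v⁻¹ : GL (Fin 2) ℤ) : Matrix (Fin 2) (Fin 2) ℤ) 0 0,
      ((v⁻¹ : GL (Fin 2) ℤ) : Matrix (Fin 2) (Fin 2) ℤ) 0 1, ?_⟩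
    have := congrFun (congrFun hEV 0) 0
    simpa [Matrix.mul_apply, Fin.sum_univ_two, Matrix.one_apply] using this
  have hEV10 : ((v⁻¹ : GL (Fin 2) ℤ) : Matrix (Fin 2) (Fin 2) ℤ) 1 0
        * (v : Matrix (Fin 2) (Fin 2) ℤ) 0 0
      + ((v⁻¹ : GL (Fin 2) ℤ) : Matrix (Fin 2) (Fin 2) ℤ) 1 1
        * (v : Matrix (Fin 2) (Fin 2) ℤ) 1 0 = 0 := by
    have := congrFun (congrFun hEV 1) 0
    simpa [Matrix.mul_apply, Fin.sum_univ_two, Matrix.one_apply] using this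
  obtain ⟨κ3, hκ3⟩ := exists_unit_AP N hcopU
  obtain ⟨κ1, hκ1⟩ := exists_unit_AP N (hcopV.symm.neg_right)
  set k3 : ℤ := (((κ3 : ZMod N)).val : ℤ) + N with hk3def
  set k1 : ℤ := (((κ1 : ZMod N)).val : ℤ) + N with hk1def
  have hk3 : ((k3 : ℤ) : ZMod N) = ((κ3 : ℤ) : ZMod N) := by
    rw [hk3def]; push_cast
    rw [ZMod.natCast_self, ZMod.natCast_rightInverse (κ3 : ZMod N), add_zero]
  have hk1 : ((k1 : ℤ) : ZMod N) = ((κ1 : ℤ) : ZMod N) := by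
    rw [hk1def]; push_cast
    rw [ZMod.natCast_self, ZMod.natCast_rightInverse (κ1 : ZMod N), add_zero]
  have hwu : IsUnit ((((u : Matrix (Fin 2) (Fin 2) ℤ) 0 0 : ℤ) : ZMod N)
      + ((k3 : ℤ) : ZMod N) * (((u : Matrix (Fin 2) (Fin 2) ℤ) 1 0 : ℤ) : ZMod N)) := by
    rw [hk3]
    have h := hκ3
    push_cast at h
    exact h
  have hzu : IsUnit ((((v : Matrix (Fin 2) (Fin 2) ℤ) 1 0 : ℤ) : ZMod N)
      - ((k1 : ℤ) : ZMod N) * (((v : Matrix (Fin 2) (Fin 2) ℤ) 0 0 : ℤ) : ZMod N)) := by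
    rw [hk1]
    have h := hκ1
    push_cast at h
    first
    | exact h
    | · convert h using 1
        ring
  obtain ⟨wi, hwi⟩ := hwu.exists_right_inv
  obtain ⟨zi, hzi⟩ := hzu.exists_right_inv
  set κ2 : ZMod N := wi * (zi * ((((u : Matrix (Fin 2) (Fin 2) ℤ) 0 0 : ℤ) : ZMod N)
      + ((k3 : ℤ) : ZMod N) * (((u : Matrix (Fin 2) (Fin 2) ℤ) 1 0 : ℤ) : ZMod N))
      * (((v : Matrix (Fin 2) (Fin 2) ℤ) 0 0 : ℤ) : ZMod N)
      - (((u : Matrix (Fin 2) (Fin 2) ℤ) 1 0 : ℤ) : ZMod N)) with hκ2def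
  set k2 : ℤ := ((κ2.val : ℕ) : ℤ) + N with hk2def
  have hk2 : ((k2 : ℤ) : ZMod N) = κ2 := by
    rw [hk2def]; push_cast
    rw [ZMod.natCast_self, ZMod.natCast_rightInverse κ2, add_zero]
  have hb1 : (1:ℤ) ≤ k1 := by rw [hk1def]; omega
  have hb2 : (1:ℤ) ≤ k2 := by rw [hk2def]; omega
  have hb3 : (1:ℤ) ≤ k3 := by rw [hk3def]; omega
  refine ⟨gammaK k1 * gammaK k2 * gammaK k3, ⟨![k1, k2, k3], ?_, ?_⟩, ?_⟩
  · intro i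
    fin_cases i
    · exact hb1
    · exact hb2
    · exact hb3
  · simp [List.ofFn_succ, mul_assoc]
  · show QuotientGroup.mk ((gammaK k1 * gammaK k2 * gammaK k3) * u) = QuotientGroup.mk v
    apply QuotientGroup.eq.mpr
    have hmem : v⁻¹ * ((gammaK k1 * gammaK k2 * gammaK k3) * u) ∈ liftedGamma0 N := by
      apply mem_liftedGamma0_of_dvd
      have hcoe : ((v⁻¹ * ((gammaK k1 * gammaK k2 * gammaK k3) * u) : GL (Fin 2) ℤ) :
          Matrix (Fin 2) (Fin 2) ℤ)
          = ((v⁻¹ : GL (Fin 2) ℤ) : Matrix (Fin 2) (Fin 2) ℤ)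
            * ((!![0,1;1,k1] * (!![0,1;1,k2] * !![0,1;1,k3]))
              * (u : Matrix (Fin 2) (Fin 2) ℤ)) := by
        simp only [Units.val_mul, mul_assoc]
        rfl
      rw [hcoe, entry_formula]
      set e10 : ℤ := ((v⁻¹ : GL (Fin 2) ℤ) : Matrix (Fin 2) (Fin 2) ℤ) 1 0 with he10
      set e11 : ℤ := ((v⁻¹ : GL (Fin 2) ℤ) : Matrix (Fin 2) (Fin 2) ℤ) 1 1 with he11
      set a : ℤ := (u : Matrix (Fin 2) (Fin 2) ℤ) 0 0 with ha
      set c : ℤ := (u : Matrix (Fin 2) (Fin 2) ℤ) 1 0 with hc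
      set a' : ℤ := (v : Matrix (Fin 2) (Fin 2) ℤ) 0 0 with ha'
      set c' : ℤ := (v : Matrix (Fin 2) (Fin 2) ℤ) 1 0 with hc'
      rw [← ZMod.intCast_zmod_eq_zero_iff_dvd]
      push_cast
      have hEVc := congrArg (fun x : ℤ => (x : ZMod N)) hEV10
      push_cast at hEVc
      have key := key_ring (R := ZMod N) (e10 : ZMod N) (e11 : ZMod N)
        (a : ZMod N) (c : ZMod N) (a' : ZMod N) (c' : ZMod N)
        ((k1 : ℤ) : ZMod N) ((k2 : ℤ) : ZMod N) ((k3 : ℤ) : ZMod N)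
        wi zi hwi hzi hEVc (by rw [hk2, hκ2def])
      linear_combination key
    have := inv_mem hmem
    simpa [_root_.mul_inv_rev] using this

end
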